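/- arXiv:1111.1589 — 6 statements merged into one kernel-verified Lean document; each statement's English description precedes it below -/
import Mathlib

section
/- Let N ≥ 1 and d ≥ 2 be integers and let α_0 ≤ α_1 ≤ ⋯ ≤ α_N be integers, not all zero, with α_0 + ⋯ + α_N = 0. Let D be a rational number such that D ≥ α_u + (d-1)·α_v for all integers u, v ≥ 0 with u + v = N. Then D ≥ -d(d-2)·α_0/(N(d-1)+1); in particular D ≥ 0, and if d ≥ 3 then D > 0. -/
theorem stmt2 (N d : ℕ) (hN : 1 ≤ N) (hd : 2 ≤ d)
    (α : ℕ → ℤ) (hmono : ∀ i j, i ≤ j → j ≤ N → α i ≤ α j)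
    (hnz : ∃ i ≤ N, α i ≠ 0)
    (hsum : ∑ i ∈ Finset.range (N + 1), α i = 0)
    (D : ℚ)
    (hD : ∀ u v : ℕ, u + v = N → ((α u : ℚ) + ((d : ℚ) - 1) * (α v : ℚ)) ≤ D) :
    -((d : ℚ) * ((d : ℚ) - 2) * (α 0 : ℚ)) / ((N : ℚ) * ((d : ℚ) - 1) + 1) ≤ D ∧
      0 ≤ D ∧ (3 ≤ d → 0 < D) := by
  -- α 0 < 0
  have hα0 : α 0 < 0 := by
    by_contra h
    push_neg at h
    have hnn : ∀ i ∈ Finset.range (N + 1), 0 ≤ α i := fun i hi =>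
      le_trans h (hmono 0 i (Nat.zero_le _) (Nat.lt_succ_iff.mp (Finset.mem_range.mp hi)))
    have hall := (Finset.sum_eq_zero_iff_of_nonneg hnn).mp hsum
    obtain ⟨i, hi, hne⟩ := hnz
    exact hne (hall i (Finset.mem_range.mpr (Nat.lt_succ_of_le hi)))
  have hα0Q : (α 0 : ℚ) < 0 := by exact_mod_cast hα0
  have hdQ : (2 : ℚ) ≤ (d : ℚ) := by exact_mod_cast hd
  have hNQ : (1 : ℚ) ≤ (N : ℚ) := by exact_mod_cast hN
  have hpos : (0 : ℚ) < (N : ℚ) * ((d : ℚ) - 1) + 1 := by nlinarith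
  -- reflection of the middle sum
  have hrefl : ∑ u ∈ Finset.Ico 1 N, (α (N - u) : ℚ) = ∑ u ∈ Finset.Ico 1 N, (α u : ℚ) := by
    apply Finset.sum_nbij' (fun u => N - u) (fun u => N - u)
    · intro a ha
      simp only [Finset.mem_Ico] at ha ⊢
      omega
    · intro a ha
      simp only [Finset.mem_Ico] at ha ⊢
      omega
    · intro a ha
      simp only [Finset.mem_Ico] at ha
      omega
    · intro a ha
      simp only [Finset.mem_Ico] at ha
      omega
    · intro a _
      rfl
  -- split the total sum
  have hsumQ : (α 0 : ℚ) + (∑ u ∈ Finset.Ico 1 N, (α u : ℚ)) + (α N : ℚ) = 0 := by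
    have h1 : ∑ i ∈ Finset.range (N + 1), (α i : ℚ) = 0 := by exact_mod_cast hsum
    rw [Finset.sum_range_succ] at h1
    rw [Finset.range_eq_Ico, Finset.sum_eq_sum_Ico_succ_bot (by omega : 0 < N)] at h1
    linarith
  set T : ℚ := ∑ u ∈ Finset.Ico 1 N, (α u : ℚ) with hT
  -- middle inequalities summed
  have hmid : T + ((d : ℚ) - 1) * T ≤ ((N : ℚ) - 1) * D := by
    have h1 : ∑ u ∈ Finset.Ico 1 N, ((α u : ℚ) + ((d : ℚ) - 1) * (α (N - u) : ℚ))
        ≤ (Finset.Ico 1 N).card • D := by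
      apply Finset.sum_le_card_nsmul
      intro u hu
      simp only [Finset.mem_Ico] at hu
      exact hD u (N - u) (by omega)
    rw [Finset.sum_add_distrib, ← Finset.mul_sum, hrefl, Nat.card_Ico, nsmul_eq_mul] at h1
    have hcast : ((N - 1 : ℕ) : ℚ) = (N : ℚ) - 1 := by
      push_cast [Nat.cast_sub hN]
      ring
    rw [hcast] at h1
    exact h1
  have h0 : (α 0 : ℚ) + ((d : ℚ) - 1) * (α N : ℚ) ≤ D := hD 0 N (by omega)
  -- key inequality
  have key : -((d : ℚ) * ((d : ℚ) - 2) * (α 0 : ℚ)) ≤ ((N : ℚ) * ((d : ℚ) - 1) + 1) * D := by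
    have h1 : (d : ℚ) * ((α 0 : ℚ) + ((d : ℚ) - 1) * (α N : ℚ)) ≤ (d : ℚ) * D :=
      mul_le_mul_of_nonneg_left h0 (by linarith)
    have h2 : ((d : ℚ) - 1) * (T + ((d : ℚ) - 1) * T) ≤ ((d : ℚ) - 1) * (((N : ℚ) - 1) * D) :=
      mul_le_mul_of_nonneg_left hmid (by linarith)
    have hTval : T = -(α 0 : ℚ) - (α N : ℚ) := by linarith
    rw [hTval] at h2
    nlinarith [h1, h2]
  have hnum : (0 : ℚ) ≤ -((d : ℚ) * ((d : ℚ) - 2) * (α 0 : ℚ)) := by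
    nlinarith [mul_nonneg (mul_nonneg (show (0:ℚ) ≤ (d:ℚ) by linarith)
      (show (0:ℚ) ≤ (d:ℚ) - 2 by linarith)) (show (0:ℚ) ≤ -(α 0 : ℚ) by linarith)]
  refine ⟨?_, ?_, ?_⟩
  · rw [div_le_iff₀ hpos]
    linarith [key]
  · nlinarith [key, hnum, hpos]
  · intro h3
    have h3Q : (3 : ℚ) ≤ (d : ℚ) := by exact_mod_cast h3
    have hnum' : (0 : ℚ) < -((d : ℚ) * ((d : ℚ) - 2) * (α 0 : ℚ)) := by
      nlinarith [mul_pos (mul_pos (show (0:ℚ) < (d:ℚ) by linarith)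
        (show (0:ℚ) < (d:ℚ) - 2 by linarith)) (show (0:ℚ) < -(α 0 : ℚ) by linarith)]
    nlinarith [key, hnum', hpos]
end

section
/- Let N ≥ 1, d ≥ 2 be integers and α_0 ≤ ⋯ ≤ α_N integers, not all zero, summing to 0. Let D be an integer with D ≥ d·α_0. Define s* to be the smallest s ∈ {-1, 0, …, N-1} such that D ≥ α_u + (d-1)·α_v for all integers u, v ≥ 0 with u + v = N - s - 1. Then s* is well defined (the defining set is nonempty). Moreover, if 0 ≤ s ≤ s*, then there exists a largest integer v_s ∈ {0, …, N-s} with D < α_{N - s - v_s} + (d-1)·α_{v_s}; this v_s satisfies 2·v_s ≥ N + s* - 2s; and if 0 < s ≤ s* then v_{s-1} ≥ v_s + 1. -/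
theorem stmt3 (N d : ℕ) (hN : 1 ≤ N) (hd : 2 ≤ d)
    (α : ℕ → ℤ) (hmono : ∀ i j, i ≤ j → j ≤ N → α i ≤ α j)
    (hnz : ∃ i ≤ N, α i ≠ 0)
    (hsum : ∑ i ∈ Finset.range (N + 1), α i = 0)
    (D : ℤ) (hD : (d : ℤ) * α 0 ≤ D) :
    ∃ sstar : ℤ,
      (-1 ≤ sstar ∧ sstar ≤ (N : ℤ) - 1 ∧
        (∀ u v : ℕ, (u : ℤ) + (v : ℤ) = (N : ℤ) - sstar - 1 →
          α u + ((d : ℤ) - 1) * α v ≤ D) ∧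
        (∀ s : ℤ, -1 ≤ s → s ≤ (N : ℤ) - 1 →
          (∀ u v : ℕ, (u : ℤ) + (v : ℤ) = (N : ℤ) - s - 1 →
            α u + ((d : ℤ) - 1) * α v ≤ D) → sstar ≤ s)) ∧
      ∃ vfun : ℕ → ℕ,
        (∀ s : ℕ, (s : ℤ) ≤ sstar →
          (vfun s ≤ N - s ∧
            D < α (N - s - vfun s) + ((d : ℤ) - 1) * α (vfun s) ∧
            (∀ v : ℕ, v ≤ N - s → D < α (N - s - v) + ((d : ℤ) - 1) * α v →
              v ≤ vfun s) ∧
            (N : ℤ) + sstar - 2 * (s : ℤ) ≤ 2 * (vfun s : ℤ))) ∧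
        (∀ s : ℕ, 0 < s → (s : ℤ) ≤ sstar → vfun s + 1 ≤ vfun (s - 1)) := by
  classical
  have hd1 : (1:ℤ) ≤ (d:ℤ) - 1 := by
    have : (2:ℤ) ≤ (d:ℤ) := by exact_mod_cast hd
    linarith
  have hd1' : (0:ℤ) ≤ (d:ℤ) - 1 := by linarith
  have hd2 : (0:ℤ) ≤ (d:ℤ) - 2 := by
    have : (2:ℤ) ≤ (d:ℤ) := by exact_mod_cast hd
    linarith
  set Qp : ℕ → Prop := fun k => ∀ u v : ℕ, u + v = k → α u + ((d:ℤ)-1) * α v ≤ D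
    with hQpdef
  have hQ0 : Qp 0 := by
    intro u v huv
    have hu : u = 0 := by omega
    have hv : v = 0 := by omega
    subst hu; subst hv
    have h : α 0 + ((d:ℤ)-1) * α 0 = (d:ℤ) * α 0 := by ring
    linarith
  set K := Nat.findGreatest Qp N with hKdef
  have hKN : K ≤ N := Nat.findGreatest_le N
  have hQK : Qp K := Nat.findGreatest_spec (Nat.zero_le N) hQ0
  set R : ℕ → ℕ → Prop := fun s v => D < α (N - s - v) + ((d:ℤ)-1) * α v with hRdef
  have key : ∀ s : ℕ, s + K + 1 ≤ N →
      Nat.findGreatest (R s) (N - s) ≤ N - s ∧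
      R s (Nat.findGreatest (R s) (N - s)) ∧
      (∀ w, w ≤ N - s → R s w → w ≤ Nat.findGreatest (R s) (N - s)) ∧
      2 * N ≤ 2 * Nat.findGreatest (R s) (N - s) + 2 * s + K + 1 := by
    intro s hs
    have hnQ : ¬ Qp (N - s) := by
      intro h
      have := Nat.le_findGreatest (Nat.sub_le N s) h
      omega
    simp only [hQpdef, not_forall, not_le] at hnQ
    obtain ⟨u, v, huv, hlt⟩ := hnQ
    have hvNs : v ≤ N - s := by omega
    have hRv : R s v := by
      simp only [hRdef]
      have h : N - s - v = u := by omega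
      rw [h]; exact hlt
    set V := Nat.findGreatest (R s) (N - s) with hVdef
    have hVle : V ≤ N - s := Nat.findGreatest_le _
    have hRV : R s V := Nat.findGreatest_spec hvNs hRv
    have hmax : ∀ w, w ≤ N - s → R s w → w ≤ V :=
      fun w hw hRw => Nat.le_findGreatest hw hRw
    set U := N - s - V with hUdef
    have hUV : U + V + s = N := by omega
    have hRV' : D < α U + ((d:ℤ)-1) * α V := hRV
    have hUleV : U ≤ V := by
      by_contra hcon
      push_neg at hcon
      have h1 : α V ≤ α U := hmono V U (le_of_lt hcon) (by omega)
      have hRU : R s U := by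
        simp only [hRdef]
        have hVU : N - s - U = V := by omega
        rw [hVU]
        have hm := mul_le_mul_of_nonneg_left h1 hd2
        linarith
      have := hmax U (by omega) hRU
      omega
    refine ⟨hVle, hRV, hmax, ?_⟩
    rcases Nat.eq_zero_or_pos U with hU0 | hUpos
    · omega
    · have H : ∀ w, w < U → α w + ((d:ℤ)-1) * α (N - s - w) ≤ D := by
        intro w hw
        by_contra h
        push_neg at h
        have hR' : R s (N - s - w) := by
          simp only [hRdef]
          have heq : N - s - (N - s - w) = w := by omega
          rw [heq]; exact h
        have := hmax (N - s - w) (by omega) hR'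
        omega
      have hQ2U : Qp (2 * U - 1) := by
        intro u' v' h'
        rcases lt_or_ge u' U with hc | hc
        · have hv'le : v' ≤ N - s - u' := by omega
          have h1 : α v' ≤ α (N - s - u') := hmono _ _ hv'le (by omega)
          have h2 := H u' hc
          have hm := mul_le_mul_of_nonneg_left h1 hd1'
          linarith
        · have hv'U : v' < U := by omega
          have h2 := H v' hv'U
          have h1 : α u' ≤ α (N - s - v') := hmono _ _ (by omega) (by omega)
          have h3 : α v' ≤ α u' := hmono _ _ (by omega) (by omega)
          have hm1 := mul_le_mul_of_nonneg_left h1 hd1'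
          have hm3 := mul_le_mul_of_nonneg_left h3 hd2
          linarith
      have h2UN : 2 * U - 1 ≤ N := by omega
      have := Nat.le_findGreatest h2UN hQ2U
      omega
  refine ⟨(N:ℤ) - 1 - (K:ℤ), ⟨by omega, by omega, ?_, ?_⟩, ?_⟩
  · intro u v huv
    have h : u + v = K := by omega
    exact hQK u v h
  · intro s hs1 hs2 hP
    set k : ℕ := ((N:ℤ) - 1 - s).toNat with hkdef
    have hks : (k:ℤ) = (N:ℤ) - 1 - s := Int.toNat_of_nonneg (by omega)
    have hkN : k ≤ N := by omega
    have hQk : Qp k := by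
      intro u v huv
      apply hP u v
      omega
    have := Nat.le_findGreatest hkN hQk
    omega
  refine ⟨fun s => Nat.findGreatest (R s) (N - s), ?_, ?_⟩
  · intro s hs
    beta_reduce
    have hs' : s + K + 1 ≤ N := by omega
    obtain ⟨h1, h2, h3, h4⟩ := key s hs'
    exact ⟨h1, h2, h3, by omega⟩
  · intro s hspos hs
    beta_reduce
    have hs' : s + K + 1 ≤ N := by omega
    obtain ⟨h1, h2, _, _⟩ := key s hs'
    set V := Nat.findGreatest (R s) (N - s) with hVdef
    have h2' : D < α (N - s - V) + ((d:ℤ)-1) * α V := h2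
    have hR' : R (s-1) (V+1) := by
      simp only [hRdef]
      have heq : N - (s-1) - (V+1) = N - s - V := by omega
      rw [heq]
      have hα : α V ≤ α (V+1) := hmono V (V+1) (by omega) (by omega)
      have hm := mul_le_mul_of_nonneg_left hα hd1'
      linarith
    exact Nat.le_findGreatest (by omega) hR'
end

section
/- Let N ≥ 1, c ≥ 1, and 0 ≤ s ≤ N-1 be integers with s + 1 ≤ c, let k_1, …, k_c be real numbers, let β_0, …, β_s be real numbers, and let j_0, …, j_s be distinct indices in {1,…,c} with I = {j_0,…,j_s}. Then the following algebraic identity holds: Σ_{t=0}^{s} β_t·k_{j_t} − (Σ_{i ∉ I} k_i)·(β_0+⋯+β_s)/(N−s) = Σ_{t=0}^{s} (β_t + (β_0+⋯+β_s)/(N−s))·(k_{j_t} − (k_1+⋯+k_c)/(N+1)). -/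
theorem stmt6 (N c s : ℕ) (hN : 1 ≤ N) (hc : 1 ≤ c) (hsN : s ≤ N - 1)
    (hsc : s + 1 ≤ c)
    (k : Fin c → ℝ) (β : Fin (s + 1) → ℝ)
    (j : Fin (s + 1) → Fin c) (hj : Function.Injective j) :
    (∑ t, β t * k (j t)) -
        (∑ i ∈ Finset.univ \ Finset.image j Finset.univ, k i) *
          ((∑ t, β t) / ((N : ℝ) - (s : ℝ))) =
      ∑ t, (β t + (∑ t', β t') / ((N : ℝ) - (s : ℝ))) *
        (k (j t) - (∑ i, k i) / ((N : ℝ) + 1)) := by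
  have hsN' : s < N := by omega
  have hD : (N : ℝ) - (s : ℝ) ≠ 0 := by
    have : (s : ℝ) < N := by exact_mod_cast hsN'
    linarith
  have hN1 : (N : ℝ) + 1 ≠ 0 := by positivity
  have himg : ∑ i ∈ Finset.image j Finset.univ, k i = ∑ t, k (j t) :=
    Finset.sum_image (fun x _ y _ h => hj h)
  rw [Finset.sum_sdiff_eq_sub (Finset.subset_univ _), himg]
  set S := ∑ t, β t with hS
  set K := ∑ i, k i with hK
  have key : ∀ t : Fin (s + 1), (β t + S / ((N : ℝ) - s)) * (k (j t) - K / ((N : ℝ) + 1)) =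
      β t * k (j t) - (K / ((N : ℝ) + 1)) * β t + (S / ((N : ℝ) - s)) * k (j t)
        - (S / ((N : ℝ) - s)) * (K / ((N : ℝ) + 1)) := fun t => by ring
  rw [Finset.sum_congr rfl (fun t _ => key t)]
  simp only [Finset.sum_sub_distrib, Finset.sum_add_distrib, ← Finset.mul_sum,
    Finset.sum_const, Finset.card_univ, Fintype.card_fin, nsmul_eq_mul, ← hS]
  push_cast
  field_simp
  ring
end

section
/- Let N ≥ 1, c ≥ 1 be integers with c ≤ N, let d_1, …, d_c be positive integers, and fix i ∈ {1,…,c}. Consider the polynomial in one variable X given by P_i(X) = Σ_{I ⊆ {1,…,c}, i ∉ I} (−1)^{c−1−|I|} · binom(N + X − Σ_{j ∉ I} d_j, N), where binom(N + X − m, N) denotes the polynomial (X + N − m)(X + N − 1 − m)⋯(X + 1 − m)/N!. Then P_i has degree N − c + 1 and its leading coefficient equals (∏_{j ≠ i} d_j)/(N − c + 1)!. -/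
open Polynomial

lemma deltaA (f : Polynomial ℚ) (a : ℚ) (ha : a ≠ 0) (n : ℕ) (hf : f.degree = ((n+1 : ℕ) : WithBot ℕ)) :
    (f - taylor (-a) f).degree = (n : ℕ) ∧
    (f - taylor (-a) f).leadingCoeff = ((n : ℚ)+1) * a * f.leadingCoeff := by
  have hf0 : f ≠ 0 := fun h => by
    rw [h, degree_zero] at hf
    exact WithBot.bot_ne_coe hf
  have hnat : f.natDegree = n + 1 := natDegree_eq_of_degree_eq_some hf
  have key : ∀ k, n ≤ k → (f - taylor (-a) f).coeff k = ((k : ℚ)+1) * a * f.coeff (k+1) := by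
    intro k hk
    have h1 : (hasseDeriv k f).natDegree < 2 := by
      have := natDegree_hasseDeriv_le f k
      omega
    rw [coeff_sub, taylor_coeff, eval_eq_sum_range' h1]
    rw [Finset.sum_range_succ, Finset.sum_range_one]
    simp only [hasseDeriv_coeff, Nat.zero_add, Nat.choose_self, Nat.cast_one, one_mul,
      pow_zero, pow_one, Nat.add_comm 1 k, Nat.choose_succ_self_right, mul_one]
    push_cast
    ring
  have hdegle : (f - taylor (-a) f).degree ≤ (n : ℕ) := by
    rw [degree_le_iff_coeff_zero]
    intro m hm
    have hm' : n < m := by exact_mod_cast hm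
    rw [key m hm'.le, coeff_eq_zero_of_natDegree_lt (by omega), mul_zero]
  have hcn : (f - taylor (-a) f).coeff n = ((n : ℚ)+1) * a * f.leadingCoeff := by
    rw [key n le_rfl, leadingCoeff, hnat]
  have hne : ((n : ℚ)+1) * a * f.leadingCoeff ≠ 0 := by
    apply mul_ne_zero (mul_ne_zero _ ha) (leadingCoeff_ne_zero.mpr hf0)
    positivity
  have hdeg : (f - taylor (-a) f).degree = (n : ℕ) :=
    le_antisymm hdegle (le_degree_of_ne_zero (by rw [hcn]; exact hne))
  refine ⟨hdeg, ?_⟩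
  rw [leadingCoeff, natDegree_eq_of_degree_eq_some hdeg, hcn]

lemma deltaB {ι : Type*} [DecidableEq ι] (a : ι → ℚ) (ha : ∀ j, 0 < a j) (S : Finset ι) :
    ∀ (n : ℕ) (f : Polynomial ℚ), S.card ≤ n → f.degree = (n : ℕ) →
    (∑ J ∈ S.powerset, (-1 : ℚ)^J.card • taylor (-(∑ j ∈ J, a j)) f).degree
        = ((n - S.card : ℕ) : WithBot ℕ) ∧
    (∑ J ∈ S.powerset, (-1 : ℚ)^J.card • taylor (-(∑ j ∈ J, a j)) f).leadingCoeff
      = (n.descFactorial S.card : ℚ) * (∏ j ∈ S, a j) * f.leadingCoeff := by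
  induction S using Finset.induction_on with
  | empty =>
      intro n f _ hf
      simp only [Finset.powerset_empty, Finset.sum_singleton, Finset.card_empty,
        Finset.sum_empty, neg_zero, taylor_zero', pow_zero, one_smul, LinearMap.id_apply,
        Nat.sub_zero, Nat.descFactorial_zero, Nat.cast_one, Finset.prod_empty, one_mul, mul_one]
      exact ⟨hf, trivial⟩
  | @insert s S hs ih =>
      intro n f hcard hf
      have hn1 : 1 ≤ n := le_trans (by simp [Finset.card_insert_of_notMem hs]) hcard
      obtain ⟨m, rfl⟩ : ∃ m, n = m + 1 := ⟨n - 1, by omega⟩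
      have hrw : ∑ J ∈ (insert s S).powerset, (-1 : ℚ)^J.card • taylor (-(∑ j ∈ J, a j)) f
          = ∑ J ∈ S.powerset, (-1 : ℚ)^J.card •
              taylor (-(∑ j ∈ J, a j)) (f - taylor (-(a s)) f) := by
        rw [Finset.sum_powerset_insert hs, ← Finset.sum_add_distrib]
        apply Finset.sum_congr rfl
        intro J hJ
        have hsJ : s ∉ J := fun h => hs (Finset.mem_powerset.mp hJ h)
        have harg : -(∑ j ∈ J, a j) + -(a s) = -(a s + ∑ j ∈ J, a j) := by ring
        rw [Finset.card_insert_of_notMem hsJ, Finset.sum_insert hsJ, map_sub, smul_sub,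
          taylor_taylor, harg, pow_succ, mul_neg_one, neg_smul, sub_eq_add_neg]
      have hA := deltaA f (a s) (ne_of_gt (ha s)) m hf
      have hcard' : S.card ≤ m := by
        have := Finset.card_insert_of_notMem hs ▸ hcard
        omega
      have hB := ih m (f - taylor (-(a s)) f) hcard' hA.1
      rw [hrw]
      constructor
      · rw [hB.1, Finset.card_insert_of_notMem hs]
        congr 1
        omega
      · rw [hB.2, hA.2, Finset.card_insert_of_notMem hs, Finset.prod_insert hs,
          Nat.succ_descFactorial_succ]
        push_cast
        ring

theorem stmt9 (N c : ℕ) (hN : 1 ≤ N) (hc : 1 ≤ c) (hcN : c ≤ N)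
    (d : Fin c → ℕ) (hd : ∀ j, 0 < d j) (i : Fin c)
    (P : Polynomial ℚ)
    (hP : P = ∑ I ∈ (Finset.univ.erase i).powerset,
      ((-1 : ℚ) ^ (c - 1 - I.card)) •
        ((N.factorial : ℚ)⁻¹ •
          ∏ t ∈ Finset.range N,
            (Polynomial.X + Polynomial.C ((t : ℚ) + 1 - ∑ j ∈ Iᶜ, (d j : ℚ)))) ) :
    P.degree = (N - c + 1 : ℕ) ∧
      P.leadingCoeff = (∏ j ∈ Finset.univ.erase i, (d j : ℚ)) / ((N - c + 1).factorial : ℚ) := by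
  classical
  set S : Finset (Fin c) := Finset.univ.erase i with hS
  have hScard : S.card = c - 1 := by
    rw [hS, Finset.card_erase_of_mem (Finset.mem_univ i), Finset.card_univ, Fintype.card_fin]
  set f₀ : Polynomial ℚ := ∏ t ∈ Finset.range N,
      (Polynomial.X + Polynomial.C ((t : ℚ) + 1 - (d i : ℚ))) with hf₀
  have hmon : f₀.Monic := monic_prod_of_monic _ _ (fun t _ => monic_X_add_C _)
  have hdeg₀ : f₀.natDegree = N := by
    rw [hf₀, natDegree_prod_of_monic _ _ (fun t _ => monic_X_add_C _)]
    simp only [natDegree_X_add_C, Finset.sum_const, Finset.card_range, smul_eq_mul, mul_one]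
  have hdeg₀' : f₀.degree = (N : ℕ) := by
    rw [degree_eq_natDegree hmon.ne_zero, hdeg₀]
  -- rewrite P
  have hsum : ∀ I ∈ S.powerset,
      (∑ j ∈ Iᶜ, (d j : ℚ)) = (d i : ℚ) + ∑ j ∈ S \ I, (d j : ℚ) := by
    intro I hI
    have hIS : I ⊆ S := Finset.mem_powerset.mp hI
    rw [Finset.compl_eq_univ_sdiff, Finset.sum_sdiff_eq_sub (Finset.subset_univ I),
      Finset.sum_sdiff_eq_sub hIS]
    rw [hS, ← Finset.add_sum_erase _ _ (Finset.mem_univ i)]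
    ring
  have hterm : ∀ I ∈ S.powerset,
      (∏ t ∈ Finset.range N,
        (Polynomial.X + Polynomial.C ((t : ℚ) + 1 - ∑ j ∈ Iᶜ, (d j : ℚ))))
      = taylor (-(∑ j ∈ S \ I, (d j : ℚ))) f₀ := by
    intro I hI
    rw [taylor_apply, hf₀, Polynomial.prod_comp]
    apply Finset.prod_congr rfl
    intro t _
    rw [add_comp, X_comp, C_comp, hsum I hI]
    rw [add_assoc, ← C_add]
    congr 1
    ring
  have hPrw : P = (N.factorial : ℚ)⁻¹ •
      ∑ J ∈ S.powerset, (-1 : ℚ)^J.card • taylor (-(∑ j ∈ J, (d j : ℚ))) f₀ := by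
    rw [hP, Finset.smul_sum]
    refine Finset.sum_nbij' (fun I => S \ I) (fun J => S \ J) ?_ ?_ ?_ ?_ ?_
    · intro I hI
      exact Finset.mem_powerset.mpr (Finset.sdiff_subset)
    · intro J hJ
      exact Finset.mem_powerset.mpr (Finset.sdiff_subset)
    · intro I hI
      exact Finset.sdiff_sdiff_eq_self (Finset.mem_powerset.mp hI)
    · intro J hJ
      exact Finset.sdiff_sdiff_eq_self (Finset.mem_powerset.mp hJ)
    · intro I hI
      rw [hterm I hI, smul_comm,
        Finset.card_sdiff_of_subset (Finset.mem_powerset.mp hI), hScard]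
  have hB := deltaB (fun j => (d j : ℚ)) (fun j => Nat.cast_pos.mpr (hd j)) S N f₀
      (by omega) hdeg₀'
  have hfac : (N - (c-1)).factorial * N.descFactorial (c - 1) = N.factorial :=
    Nat.factorial_mul_descFactorial (by omega)
  have hNc : N - (c - 1) = N - c + 1 := by omega
  have hfacne : ((N.factorial : ℚ)) ≠ 0 := by exact_mod_cast N.factorial_ne_zero
  have hfacne2 : (((N - c + 1).factorial : ℚ)) ≠ 0 := by exact_mod_cast (N - c + 1).factorial_ne_zero
  rw [hPrw, smul_eq_C_mul]
  constructor
  · rw [degree_mul, degree_C (inv_ne_zero hfacne), hB.1, hScard, hNc, zero_add]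
  · rw [leadingCoeff_mul, leadingCoeff_C, hB.2, hScard, hmon.leadingCoeff, mul_one]
    rw [eq_div_iff hfacne2]
    have : (N.factorial : ℚ) = ((N - c + 1).factorial : ℚ) * (N.descFactorial (c-1) : ℚ) := by
      rw [← hNc]
      exact_mod_cast hfac.symm
    have hdfne : ((N.descFactorial (c-1) : ℚ)) ≠ 0 := by
      have : N.descFactorial (c-1) ≠ 0 := by
        rw [Ne, Nat.descFactorial_eq_zero_iff_lt]; omega
      exact_mod_cast this
    field_simp [this]
    simp only [this, Nat.add_comm 1 (N - c)]
    ring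
end

section
/- Work in the polynomial ring A = ℤ[X_0,…,X_N, (a_L)_{L ∈ M_{d_1}}, (b_M)_{M ∈ M_{d_2}}], where M_d denotes the set of monomials of degree d in X_0,…,X_N. Let f = Σ_{L ∈ M_{d_1}} a_L·L and g = Σ_{M ∈ M_{d_2}} b_M·M be the generic homogeneous forms of degrees d_1 ≤ d_2. Then for every integer j with 0 ≤ j ≤ d_2 − d_1 + 1 there exist q_j, r_j ∈ A, homogeneous of tridegree (d_2 − d_1, j − 1, 1) and (d_2, j, 1) respectively (degrees in the X-variables, the a-variables, and the b-variables), such that a_{X_0^{d_1}}^j · g = q_j·f + r_j and no monomial of r_j is divisible by X_0^{d_2 + 1 − j}. Moreover, if j ≥ 1, every monomial occurring in r_j is divisible by a_{X_0^{d_1}} or by b_{X_0^{d_2}}. -/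
open MvPolynomial

/-- Index type for the monomials of `ℤ[X_0,…,X_N]` (indexed by exponent vectors). -/
abbrev MonIdx (N : ℕ) := Fin (N + 1) →₀ ℕ

/-- Variables of the big polynomial ring: the `X_s`, the `a_L`, and the `b_M`. -/
abbrev GenVar (N : ℕ) := Fin (N + 1) ⊕ (MonIdx N ⊕ MonIdx N)

/-- The finite set of exponent vectors of total degree `d`. -/
noncomputable def degMon (N d : ℕ) : Finset (MonIdx N) :=
  (Finset.Iic (Finsupp.equivFunOnFinite.symm fun _ => d)).filter
    (fun m => (m.sum fun _ e => e) = d)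

/-- The generic form of degree `d` : `Σ_L a_L · L`, with coefficient variables `a`. -/
noncomputable def genericForm (N d : ℕ) (a : MonIdx N → GenVar N) :
    MvPolynomial (GenVar N) ℤ :=
  ∑ L ∈ degMon N d,
    X (a L) * MvPolynomial.monomial (L.mapDomain Sum.inl) (1 : ℤ)

/-- Weight counting the total degree in the `X`-variables. -/
def wX (N : ℕ) : GenVar N → ℕ := Sum.elim (fun _ => 1) (fun _ => 0)

/-- Weight counting the total degree in the `a`-variables. -/
def wa (N : ℕ) : GenVar N → ℕ :=
  Sum.elim (fun _ => 0) (Sum.elim (fun _ => 1) (fun _ => 0))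

/-- Weight counting the total degree in the `b`-variables. -/
def wb (N : ℕ) : GenVar N → ℕ :=
  Sum.elim (fun _ => 0) (Sum.elim (fun _ => 0) (fun _ => 1))

section Aux

variable {N : ℕ}

lemma apply_le_sum (m : MonIdx N) (s : Fin (N + 1)) : m s ≤ m.sum fun _ e => e := by
  classical
  by_cases h : s ∈ m.support
  · exact Finset.single_le_sum (f := fun t => m t) (fun _ _ => Nat.zero_le _) h
  · simp [Finsupp.notMem_support_iff.mp h]

lemma mem_degMon {d : ℕ} {m : MonIdx N} : m ∈ degMon N d ↔ (m.sum fun _ e => e) = d := by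
  classical
  simp only [degMon, Finset.mem_filter, Finset.mem_Iic, and_iff_right_iff_imp]
  intro h
  rw [Finsupp.le_def]
  intro s
  simpa [h] using apply_le_sum m s

lemma single_mem_degMon (d : ℕ) (s : Fin (N + 1)) : Finsupp.single s d ∈ degMon N d :=
  mem_degMon.mpr (Finsupp.sum_single_index rfl)

lemma eq_single_of_apply_eq {d : ℕ} {m : MonIdx N} {s : Fin (N + 1)}
    (hsum : (m.sum fun _ e => e) = d) (h : m s = d) : m = Finsupp.single s d := by
  classical
  have h1 : Finsupp.single s (m s) + m.erase s = m := Finsupp.single_add_erase s m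
  have h2 : m s + ((m.erase s).sum fun _ e => e) = d := by
    rw [← hsum]
    conv_rhs => rw [← h1]
    rw [Finsupp.sum_add_index' (fun _ => rfl) (fun _ _ _ => rfl),
      Finsupp.sum_single_index rfl]
  have h3 : ((m.erase s).sum fun _ e => e) = 0 := by omega
  have h4 : m.erase s = 0 := by
    ext t
    have := apply_le_sum (m.erase s) t
    rw [h3] at this
    simpa using this
  rw [← h1, h4, add_zero, h]

lemma weight_single (w : GenVar N → ℕ) (v : GenVar N) (n : ℕ) :
    Finsupp.weight w (Finsupp.single v n) = n * w v := by
  rw [Finsupp.weight_apply, Finsupp.sum_single_index (by simp), smul_eq_mul]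

lemma weight_mapDomain (w : GenVar N → ℕ) (L : MonIdx N) :
    Finsupp.weight w (L.mapDomain Sum.inl) = L.sum fun s e => e * w (Sum.inl s) := by
  rw [Finsupp.weight_apply, Finsupp.sum_mapDomain_index (fun _ => by simp)
    (fun _ _ _ => by rw [add_smul])]
  simp [smul_eq_mul]

lemma weight_wX_mapDomain (L : MonIdx N) :
    Finsupp.weight (wX N) (L.mapDomain Sum.inl) = L.sum fun _ e => e := by
  rw [weight_mapDomain]; simp [wX]

lemma genericForm_eq (d : ℕ) (a : MonIdx N → GenVar N) :
    genericForm N d a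
      = ∑ L ∈ degMon N d,
          monomial (Finsupp.single (a L) 1 + L.mapDomain Sum.inl) (1 : ℤ) := by
  unfold genericForm
  refine Finset.sum_congr rfl fun L _ => ?_
  rw [X, monomial_mul, one_mul]

lemma mem_support_genericForm {d : ℕ} {a : MonIdx N → GenVar N} {m : GenVar N →₀ ℕ}
    (hm : m ∈ (genericForm N d a).support) :
    ∃ L ∈ degMon N d, m = Finsupp.single (a L) 1 + L.mapDomain Sum.inl := by
  classical
  rw [genericForm_eq] at hm
  have := MvPolynomial.support_sum hm
  simp only [Finset.mem_biUnion, support_monomial, if_neg one_ne_zero,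
    Finset.mem_singleton] at this
  obtain ⟨L, hL, hLm⟩ := this
  exact ⟨L, hL, hLm⟩

lemma genericForm_hom_wX (d : ℕ) (a : MonIdx N → GenVar N)
    (ha : ∀ L, wX N (a L) = 0) :
    (genericForm N d a).IsWeightedHomogeneous (wX N) d := by
  rw [genericForm_eq]
  refine IsWeightedHomogeneous.sum _ _ _ fun L hL => isWeightedHomogeneous_monomial _ _ _ ?_
  rw [map_add, weight_single, ha, weight_wX_mapDomain, mem_degMon.mp hL, mul_zero, zero_add]

lemma genericForm_hom (w : GenVar N → ℕ) (d c : ℕ) (a : MonIdx N → GenVar N)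
    (hw : ∀ s, w (Sum.inl s) = 0) (hc : ∀ L, w (a L) = c) :
    (genericForm N d a).IsWeightedHomogeneous w c := by
  rw [genericForm_eq]
  refine IsWeightedHomogeneous.sum _ _ _ fun L hL => isWeightedHomogeneous_monomial _ _ _ ?_
  rw [map_add, weight_single, hc, weight_mapDomain]
  simp [hw]

lemma hom_sub {w : GenVar N → ℕ} {p q : MvPolynomial (GenVar N) ℤ} {n : ℕ}
    (hp : p.IsWeightedHomogeneous w n) (hq : q.IsWeightedHomogeneous w n) :
    (p - q).IsWeightedHomogeneous w n := by
  intro d hd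
  by_cases h1 : coeff d p = 0
  · apply hq
    rw [coeff_sub, h1, zero_sub, neg_ne_zero] at hd
    exact hd
  · exact hp h1

lemma hom_Xpow (w : GenVar N → ℕ) (v : GenVar N) (k : ℕ) :
    ((X v : MvPolynomial (GenVar N) ℤ) ^ k).IsWeightedHomogeneous w (k * w v) := by
  rw [X_pow_eq_monomial]
  exact isWeightedHomogeneous_monomial _ _ _ (weight_single w v k)

lemma hom_of_eq {w : GenVar N → ℕ} {p : MvPolynomial (GenVar N) ℤ} {m n : ℕ}
    (h : p.IsWeightedHomogeneous w m) (e : m = n) : p.IsWeightedHomogeneous w n := e ▸ h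

end Aux

set_option maxHeartbeats 1600000 in
lemma key_lemma (N d1 d2 : ℕ) (hd1 : 2 ≤ d1) (h12 : d1 ≤ d2)
    (f g : MvPolynomial (GenVar N) ℤ)
    (hf : f = genericForm N d1 (fun L => Sum.inr (Sum.inl L)))
    (hg : g = genericForm N d2 (fun M => Sum.inr (Sum.inr M))) :
    ∀ j : ℕ, j ≤ d2 - d1 + 1 →
    ∃ q r : MvPolynomial (GenVar N) ℤ,
      (X (Sum.inr (Sum.inl (Finsupp.single 0 d1))) : MvPolynomial (GenVar N) ℤ) ^ j * g
          = q * f + r ∧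
      q.IsWeightedHomogeneous (wX N) (d2 - d1) ∧
      q.IsWeightedHomogeneous (wa N) (j - 1) ∧
      q.IsWeightedHomogeneous (wb N) 1 ∧
      r.IsWeightedHomogeneous (wX N) d2 ∧
      r.IsWeightedHomogeneous (wa N) j ∧
      r.IsWeightedHomogeneous (wb N) 1 ∧
      (∀ m ∈ r.support, m (Sum.inl 0) < d2 + 1 - j) ∧
      (∀ m ∈ r.support, m (Sum.inl 0) + j = d2 →
        1 ≤ m (Sum.inr (Sum.inl (Finsupp.single 0 d1))) ∨
        1 ≤ m (Sum.inr (Sum.inr (Finsupp.single 0 d2)))) ∧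
      (1 ≤ j → ∀ m ∈ r.support,
        1 ≤ m (Sum.inr (Sum.inl (Finsupp.single 0 d1))) ∨
        1 ≤ m (Sum.inr (Sum.inr (Finsupp.single 0 d2)))) ∧
      (j = 0 → q = 0) := by
  classical
  set va : GenVar N := Sum.inr (Sum.inl (Finsupp.single 0 d1)) with hva
  set vb : GenVar N := Sum.inr (Sum.inr (Finsupp.single 0 d2)) with hvb
  -- facts about g
  have hg_wX : g.IsWeightedHomogeneous (wX N) d2 := by
    rw [hg]; exact genericForm_hom_wX _ _ (fun L => rfl)
  have hg_wa : g.IsWeightedHomogeneous (wa N) 0 := by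
    rw [hg]; exact genericForm_hom _ _ _ _ (fun s => rfl) (fun L => rfl)
  have hg_wb : g.IsWeightedHomogeneous (wb N) 1 := by
    rw [hg]; exact genericForm_hom _ _ _ _ (fun s => rfl) (fun L => rfl)
  have hf_wX : f.IsWeightedHomogeneous (wX N) d1 := by
    rw [hf]; exact genericForm_hom_wX _ _ (fun L => rfl)
  have hf_wa : f.IsWeightedHomogeneous (wa N) 1 := by
    rw [hf]; exact genericForm_hom _ _ _ _ (fun s => rfl) (fun L => rfl)
  have hf_wb : f.IsWeightedHomogeneous (wb N) 0 := by
    rw [hf]; exact genericForm_hom _ _ _ _ (fun s => rfl) (fun L => rfl)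
  -- support of g
  have hg_supp : ∀ m ∈ g.support, ∃ M ∈ degMon N d2,
      m = Finsupp.single (Sum.inr (Sum.inr M) : GenVar N) 1 + M.mapDomain Sum.inl := by
    intro m hm
    rw [hg] at hm
    exact mem_support_genericForm hm
  intro j
  induction j with
  | zero =>
    intro _
    refine ⟨0, g, by simp, isWeightedHomogeneous_zero _ _ _, isWeightedHomogeneous_zero _ _ _,
      isWeightedHomogeneous_zero _ _ _, hg_wX, hg_wa, hg_wb, ?_, ?_, fun h => absurd h (by omega), fun _ => rfl⟩
    · intro m hm
      obtain ⟨M, hM, rfl⟩ := hg_supp m hm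
      rw [Finsupp.add_apply,
        Finsupp.single_eq_of_ne' (show (Sum.inr (Sum.inr M) : GenVar N) ≠ Sum.inl 0 by simp),
        zero_add, Finsupp.mapDomain_apply Sum.inl_injective]
      have := apply_le_sum M 0
      rw [mem_degMon.mp hM] at this
      omega
    · intro m hm h0
      obtain ⟨M, hM, rfl⟩ := hg_supp m hm
      rw [Finsupp.add_apply,
        Finsupp.single_eq_of_ne' (show (Sum.inr (Sum.inr M) : GenVar N) ≠ Sum.inl 0 by simp),
        zero_add, Finsupp.mapDomain_apply Sum.inl_injective, add_zero] at h0
      have hMs : M = Finsupp.single 0 d2 := eq_single_of_apply_eq (mem_degMon.mp hM) h0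
      right
      subst hMs
      rw [hvb, Finsupp.add_apply, Finsupp.single_eq_same,
        Finsupp.mapDomain_notin_range _ _ (by simp)]
      omega
  | succ j ih =>
    intro hj1
    have hj : j ≤ d2 - d1 := by omega
    have hjd : d1 + j ≤ d2 := by omega
    obtain ⟨q, r, hqr, hq_wX, hq_wa, hq_wb, hr_wX, hr_wa, hr_wb, hr_lt, hr_hi, hr_ab, hq0⟩ :=
      ih (by omega)
    set s : GenVar N →₀ ℕ := Finsupp.single (Sum.inl (0 : Fin (N + 1))) (d2 - j) with hs
    set c : MvPolynomial (GenVar N) ℤ := r.divMonomial s with hc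
    set rm : MvPolynomial (GenVar N) ℤ := r.modMonomial s with hrm
    set k : ℕ := d2 - d1 - j with hk
    set hp : MvPolynomial (GenVar N) ℤ :=
      X va * X (Sum.inl (0 : Fin (N + 1))) ^ d1 - f with hhp
    -- facts about c
    have hc_mem : ∀ m ∈ c.support, s + m ∈ r.support := by
      intro m hm
      rw [mem_support_iff] at hm ⊢
      rwa [hc, coeff_divMonomial] at hm
    have hc_X0 : ∀ m ∈ c.support, m (Sum.inl 0) = 0 ∧ (s + m) (Sum.inl 0) = d2 - j := by
      intro m hm
      have h1 := hr_lt _ (hc_mem m hm)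
      rw [Finsupp.add_apply, hs, Finsupp.single_eq_same] at h1 ⊢
      omega
    have hc_ab : ∀ m ∈ c.support, 1 ≤ m va ∨ 1 ≤ m vb := by
      intro m hm
      have h1 := hr_hi _ (hc_mem m hm) (by
        have := (hc_X0 m hm).2
        omega)
      rwa [Finsupp.add_apply, Finsupp.add_apply, hs,
        Finsupp.single_eq_of_ne'
          (show (Sum.inl (0 : Fin (N + 1)) : GenVar N) ≠ va by simp [hva]),
        Finsupp.single_eq_of_ne'
          (show (Sum.inl (0 : Fin (N + 1)) : GenVar N) ≠ vb by simp [hvb]),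
        zero_add, zero_add] at h1
    have hc_hom : ∀ (w : GenVar N → ℕ) (n D : ℕ), r.IsWeightedHomogeneous w D →
        (Finsupp.weight w s + n = D) → c.IsWeightedHomogeneous w n := by
      intro w n D hD hn d hd
      rw [hc, coeff_divMonomial] at hd
      have h1 := hD hd
      rw [map_add] at h1
      omega
    have hc_wX : c.IsWeightedHomogeneous (wX N) j :=
      hc_hom _ _ _ hr_wX (by rw [hs, weight_single]; simp only [wX, Sum.elim_inl, mul_one]; omega)
    have hc_wa : c.IsWeightedHomogeneous (wa N) j :=
      hc_hom _ _ _ hr_wa (by rw [hs, weight_single]; simp [wa])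
    have hc_wb : c.IsWeightedHomogeneous (wb N) 1 :=
      hc_hom _ _ _ hr_wb (by rw [hs, weight_single]; simp [wb])
    -- facts about rm
    have hrm_coeff : ∀ d, coeff d rm ≠ 0 → ¬ s ≤ d ∧ coeff d r ≠ 0 := by
      intro d hd
      by_cases hle : s ≤ d
      · rw [hrm, coeff_modMonomial_of_le _ hle] at hd
        exact absurd rfl hd
      · rw [hrm, coeff_modMonomial_of_not_le _ hle] at hd
        exact ⟨hle, hd⟩
    have hrm_supp : ∀ m ∈ rm.support, m (Sum.inl 0) < d2 - j ∧ m ∈ r.support := by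
      intro m hm
      rw [mem_support_iff] at hm
      obtain ⟨h1, h2⟩ := hrm_coeff m hm
      refine ⟨?_, mem_support_iff.mpr h2⟩
      by_contra hcon
      exact h1 (by rw [hs]; exact Finsupp.single_le_iff.mpr (by omega))
    have hrm_hom : ∀ (w : GenVar N → ℕ) (D : ℕ), r.IsWeightedHomogeneous w D →
        rm.IsWeightedHomogeneous w D := by
      intro w D hD d hd
      exact hD (hrm_coeff d hd).2
    -- facts about hp
    have hXX : X va * (X (Sum.inl (0 : Fin (N + 1))) : MvPolynomial (GenVar N) ℤ) ^ d1
        = monomial (Finsupp.single va 1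
            + (Finsupp.single (0 : Fin (N + 1)) d1).mapDomain Sum.inl) (1 : ℤ) := by
      have hXva : (X va : MvPolynomial (GenVar N) ℤ)
          = monomial (Finsupp.single va 1) (1 : ℤ) := by
        rw [← pow_one (X va : MvPolynomial (GenVar N) ℤ), X_pow_eq_monomial]
      rw [hXva, X_pow_eq_monomial, monomial_mul, one_mul, Finsupp.mapDomain_single]
    have hsum_split : genericForm N d1 (fun L => (Sum.inr (Sum.inl L) : GenVar N))
        = monomial (Finsupp.single (Sum.inr (Sum.inl (Finsupp.single 0 d1)) : GenVar N) 1
            + (Finsupp.single (0 : Fin (N + 1)) d1).mapDomain Sum.inl) (1 : ℤ)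
          + ∑ L ∈ (degMon N d1).erase (Finsupp.single 0 d1),
              monomial (Finsupp.single (Sum.inr (Sum.inl L) : GenVar N) 1
                + L.mapDomain Sum.inl) (1 : ℤ) := by
      rw [genericForm_eq]
      exact (Finset.add_sum_erase _ _ (single_mem_degMon d1 0)).symm
    have hp_eq : hp = -∑ L ∈ (degMon N d1).erase (Finsupp.single 0 d1),
        monomial (Finsupp.single (Sum.inr (Sum.inl L) : GenVar N) 1
          + L.mapDomain Sum.inl) (1 : ℤ) := by
      rw [hhp, hXX, hf, hsum_split, hva]
      ring
    have hp_supp : ∀ m ∈ hp.support, ∃ L ∈ degMon N d1, L ≠ Finsupp.single 0 d1 ∧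
        m = Finsupp.single (Sum.inr (Sum.inl L) : GenVar N) 1 + L.mapDomain Sum.inl := by
      intro m hm
      rw [hp_eq, support_neg] at hm
      have := MvPolynomial.support_sum hm
      simp only [Finset.mem_biUnion, Finset.mem_erase, support_monomial, if_neg one_ne_zero,
        Finset.mem_singleton] at this
      obtain ⟨L, ⟨hL1, hL2⟩, hLm⟩ := this
      exact ⟨L, hL2, hL1, hLm⟩
    have hp_X0 : ∀ m ∈ hp.support, m (Sum.inl 0) < d1 := by
      intro m hm
      obtain ⟨L, hL, hLne, rfl⟩ := hp_supp m hm
      rw [Finsupp.add_apply,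
        Finsupp.single_eq_of_ne' (show (Sum.inr (Sum.inl L) : GenVar N) ≠ Sum.inl 0 by simp),
        zero_add, Finsupp.mapDomain_apply Sum.inl_injective]
      have h1 := apply_le_sum L 0
      rw [mem_degMon.mp hL] at h1
      rcases Nat.lt_or_ge (L 0) d1 with h | h
      · exact h
      · exact absurd (eq_single_of_apply_eq (mem_degMon.mp hL) (by omega)) hLne
    have hp_wX : hp.IsWeightedHomogeneous (wX N) d1 := by
      refine hom_sub (hom_of_eq ((isWeightedHomogeneous_X ℤ (wX N) va).mul
        (hom_Xpow (wX N) (Sum.inl 0) d1)) ?_) hf_wX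
      simp [wX, hva]
    have hp_wa : hp.IsWeightedHomogeneous (wa N) 1 := by
      refine hom_sub (hom_of_eq ((isWeightedHomogeneous_X ℤ (wa N) va).mul
        (hom_Xpow (wa N) (Sum.inl 0) d1)) ?_) hf_wa
      simp [wa, hva]
    have hp_wb : hp.IsWeightedHomogeneous (wb N) 0 := by
      refine hom_sub (hom_of_eq ((isWeightedHomogeneous_X ℤ (wb N) va).mul
        (hom_Xpow (wb N) (Sum.inl 0) d1)) ?_) hf_wb
      simp [wb, hva]
    -- homogeneity of X va
    have hXva_wX : (X va : MvPolynomial (GenVar N) ℤ).IsWeightedHomogeneous (wX N) 0 :=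
      hom_of_eq (isWeightedHomogeneous_X ℤ (wX N) va) (by simp [wX, hva])
    have hXva_wa : (X va : MvPolynomial (GenVar N) ℤ).IsWeightedHomogeneous (wa N) 1 :=
      hom_of_eq (isWeightedHomogeneous_X ℤ (wa N) va) (by simp [wa, hva])
    have hXva_wb : (X va : MvPolynomial (GenVar N) ℤ).IsWeightedHomogeneous (wb N) 0 :=
      hom_of_eq (isWeightedHomogeneous_X ℤ (wb N) va) (by simp [wb, hva])
    -- homogeneity of Xk
    set Xk : MvPolynomial (GenVar N) ℤ := X (Sum.inl (0 : Fin (N + 1))) ^ k with hXk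
    have hXk_wX : Xk.IsWeightedHomogeneous (wX N) k :=
      hom_of_eq (hom_Xpow (wX N) (Sum.inl 0) k) (by simp [wX])
    have hXk_wa : Xk.IsWeightedHomogeneous (wa N) 0 :=
      hom_of_eq (hom_Xpow (wa N) (Sum.inl 0) k) (by simp [wa])
    have hXk_wb : Xk.IsWeightedHomogeneous (wb N) 0 :=
      hom_of_eq (hom_Xpow (wb N) (Sum.inl 0) k) (by simp [wb])
    have hfull : ∀ m ∈ (X va * rm + c * Xk * hp).support, 1 ≤ m va ∨ 1 ≤ m vb := by
      intro m hm
      rcases Finset.mem_union.mp (MvPolynomial.support_add hm) with hm1 | hm1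
      · obtain ⟨m1, hm1', m2, hm2', rfl⟩ := Finset.mem_add.mp (MvPolynomial.support_mul _ _ hm1)
        rw [support_X, Finset.mem_singleton] at hm1'
        subst hm1'
        left
        rw [Finsupp.add_apply, Finsupp.single_eq_same]
        omega
      · obtain ⟨m12, hm12, m3, hm3, rfl⟩ := Finset.mem_add.mp (MvPolynomial.support_mul _ _ hm1)
        obtain ⟨m1, hm1', m2, hm2', rfl⟩ := Finset.mem_add.mp (MvPolynomial.support_mul _ _ hm12)
        rw [hXk, X_pow_eq_monomial, support_monomial, if_neg one_ne_zero,
          Finset.mem_singleton] at hm2'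
        subst hm2'
        rcases hc_ab m1 hm1' with h | h
        · left
          rw [Finsupp.add_apply, Finsupp.add_apply, Finsupp.single_eq_of_ne'
            (show (Sum.inl (0 : Fin (N + 1)) : GenVar N) ≠ va by simp [hva])]
          omega
        · right
          rw [Finsupp.add_apply, Finsupp.add_apply, Finsupp.single_eq_of_ne'
            (show (Sum.inl (0 : Fin (N + 1)) : GenVar N) ≠ vb by simp [hvb])]
          omega
    refine ⟨X va * q + c * Xk, X va * rm + c * Xk * hp, ?_, ?_, ?_, ?_, ?_, ?_, ?_, ?_, ?_, ?_,
      fun h => absurd h (Nat.succ_ne_zero j)⟩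
    -- the division identity
    · have h1 : monomial s (1 : ℤ) * c + rm = r := divMonomial_add_modMonomial r s
      have h2 : monomial s (1 : ℤ) = Xk * X (Sum.inl (0 : Fin (N + 1))) ^ d1 := by
        rw [hXk, ← pow_add, X_pow_eq_monomial, hs, show k + d1 = d2 - j by omega]
      calc (X va : MvPolynomial (GenVar N) ℤ) ^ (j + 1) * g
          = X va * (X va ^ j * g) := by ring
        _ = X va * (q * f + r) := by rw [hqr]
        _ = X va * (q * f + (monomial s (1 : ℤ) * c + rm)) := by rw [h1]
        _ = X va * (q * f + (Xk * X (Sum.inl (0 : Fin (N + 1))) ^ d1 * c + rm)) := by rw [h2]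
        _ = (X va * q + c * Xk) * f
            + (X va * rm + c * Xk * (X va * X (Sum.inl (0 : Fin (N + 1))) ^ d1 - f)) := by
              ring
    · exact (hom_of_eq (hXva_wX.mul hq_wX) (by omega)).add
        (hom_of_eq (hc_wX.mul hXk_wX) (by omega))
    · -- wa degree (j+1)-1 = j
      have haq : (X va * q).IsWeightedHomogeneous (wa N) j := by
        rcases Nat.eq_zero_or_pos j with hj0 | hj0
        · rw [hq0 hj0, mul_zero]
          exact isWeightedHomogeneous_zero _ _ _
        · exact hom_of_eq (hXva_wa.mul hq_wa) (by omega)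
      exact hom_of_eq (haq.add (hom_of_eq (hc_wa.mul hXk_wa) (by omega))) (by omega)
    · exact (hom_of_eq (hXva_wb.mul hq_wb) (by omega)).add
        (hom_of_eq (hc_wb.mul hXk_wb) (by omega))
    · exact (hom_of_eq (hXva_wX.mul (hrm_hom _ _ hr_wX)) (by omega)).add
        (hom_of_eq ((hc_wX.mul hXk_wX).mul hp_wX) (by omega))
    · exact (hom_of_eq (hXva_wa.mul (hrm_hom _ _ hr_wa)) (by omega)).add
        (hom_of_eq ((hc_wa.mul hXk_wa).mul hp_wa) (by omega))
    · exact (hom_of_eq (hXva_wb.mul (hrm_hom _ _ hr_wb)) (by omega)).add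
        (hom_of_eq ((hc_wb.mul hXk_wb).mul hp_wb) (by omega))
    -- support bound on X_0-exponent
    · intro m hm
      rcases Finset.mem_union.mp (MvPolynomial.support_add hm) with hm1 | hm1
      · obtain ⟨m1, hm1', m2, hm2', rfl⟩ := Finset.mem_add.mp (MvPolynomial.support_mul _ _ hm1)
        rw [support_X, Finset.mem_singleton] at hm1'
        subst hm1'
        have h1 := (hrm_supp m2 hm2').1
        rw [Finsupp.add_apply,
          Finsupp.single_eq_of_ne' (show va ≠ Sum.inl 0 by simp [hva])]
        omega
      · obtain ⟨m12, hm12, m3, hm3, rfl⟩ := Finset.mem_add.mp (MvPolynomial.support_mul _ _ hm1)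
        obtain ⟨m1, hm1', m2, hm2', rfl⟩ := Finset.mem_add.mp (MvPolynomial.support_mul _ _ hm12)
        rw [hXk, X_pow_eq_monomial, support_monomial, if_neg one_ne_zero,
          Finset.mem_singleton] at hm2'
        subst hm2'
        have h1 := (hc_X0 m1 hm1').1
        have h3 := hp_X0 m3 hm3
        rw [Finsupp.add_apply, Finsupp.add_apply, Finsupp.single_eq_same, h1]
        omega
    -- high-part divisibility (follows from full divisibility)
    · intro m hm _
      exact hfull m hm
    · intro _ m hm
      exact hfull m hm

theorem stmt11 (N d1 d2 : ℕ) (hN : 1 ≤ N) (hd1 : 2 ≤ d1) (h12 : d1 ≤ d2)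
    (j : ℕ) (hj : j ≤ d2 - d1 + 1)
    (f g : MvPolynomial (GenVar N) ℤ)
    (hf : f = genericForm N d1 (fun L => Sum.inr (Sum.inl L)))
    (hg : g = genericForm N d2 (fun M => Sum.inr (Sum.inr M))) :
    ∃ q r : MvPolynomial (GenVar N) ℤ,
      (X (Sum.inr (Sum.inl (Finsupp.single 0 d1))) : MvPolynomial (GenVar N) ℤ) ^ j * g
          = q * f + r ∧
      q.IsWeightedHomogeneous (wX N) (d2 - d1) ∧
      q.IsWeightedHomogeneous (wa N) (j - 1) ∧
      q.IsWeightedHomogeneous (wb N) 1 ∧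
      r.IsWeightedHomogeneous (wX N) d2 ∧
      r.IsWeightedHomogeneous (wa N) j ∧
      r.IsWeightedHomogeneous (wb N) 1 ∧
      (∀ m ∈ r.support, m (Sum.inl 0) < d2 + 1 - j) ∧
      (1 ≤ j → ∀ m ∈ r.support,
        1 ≤ m (Sum.inr (Sum.inl (Finsupp.single 0 d1))) ∨
        1 ≤ m (Sum.inr (Sum.inr (Finsupp.single 0 d2)))) := by
  obtain ⟨q, r, h1, h2, h3, h4, h5, h6, h7, h8, _, h10, _⟩ :=
    key_lemma N d1 d2 hd1 h12 f g hf hg j hj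
  exact ⟨q, r, h1, h2, h3, h4, h5, h6, h7, h8, h10⟩
end

section
/- Let K be an algebraically closed field, N ≥ 3, c ≥ 2 with c ≤ N−1, and let F_1, …, F_c ∈ K[X_0,…,X_N] be homogeneous quadratic forms defining a smooth complete intersection {F_1 = ⋯ = F_c = 0} of codimension c in P^N_K. Let α_0 ≤ ⋯ ≤ α_N be integers, not all zero, with α_i + α_{N−i} = 0 for all i. Then it is not possible that deg_α(F_i) = 0 for all i ∈ {1,…,c}, where deg_α(F) is the maximal α-degree of a monomial of F. -/
open MvPolynomial

section AuxFinsupp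

variable {σ : Type*}

lemma aux_degree_add (a b : σ →₀ ℕ) : (a + b).degree = a.degree + b.degree := by
  rw [Finsupp.degree_eq_weight_one]
  exact map_add _ a b

lemma aux_degree_single (k : σ) (n : ℕ) : (Finsupp.single k n).degree = n := by
  rcases eq_or_ne n 0 with rfl | h
  · simp [Finsupp.degree_eq_zero_iff]
  · rw [Finsupp.degree_apply, Finsupp.support_single_ne_zero _ h, Finset.sum_singleton,
      Finsupp.single_eq_same]

lemma aux_deg_one (d : σ →₀ ℕ) (hd : d.degree = 1) : ∃ k, d = Finsupp.single k 1 := by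
  have h0 : d ≠ 0 := by
    rintro rfl; simp at hd
  obtain ⟨k, hk⟩ := Finsupp.support_nonempty_iff.mpr h0
  have hcard : d.support.card ≤ 1 := by
    calc d.support.card = ∑ _i ∈ d.support, 1 := by simp
    _ ≤ ∑ i ∈ d.support, d i := Finset.sum_le_sum
        (fun i hi => Nat.one_le_iff_ne_zero.mpr (Finsupp.mem_support_iff.mp hi))
    _ = 1 := hd
  have hsupp : d.support = {k} := by
    apply Finset.eq_singleton_iff_unique_mem.mpr
    exact ⟨hk, fun x hx => Finset.card_le_one.mp hcard x hx k hk⟩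
  obtain ⟨-, h2⟩ := Finsupp.support_eq_singleton.mp hsupp
  have hdk : d k = 1 := by
    have := hd
    rw [Finsupp.degree_apply, hsupp, Finset.sum_singleton] at this
    exact this
  rw [hdk] at h2
  exact ⟨k, h2⟩

lemma aux_deg_two (d : σ →₀ ℕ) (hd : d.degree = 2) {l : σ} (hl : d l ≠ 0) :
    ∃ k, d = Finsupp.single l 1 + Finsupp.single k 1 := by
  have h2 : Finsupp.single l (d l) + d.erase l = d := Finsupp.single_add_erase l d
  have hdeg : d l + (d.erase l).degree = 2 := by
    rw [← aux_degree_single l (d l), ← aux_degree_add, h2, hd]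
  have hl1 : 1 ≤ d l := Nat.one_le_iff_ne_zero.mpr hl
  rcases Nat.lt_or_ge (d l) 2 with h | h
  · -- d l = 1
    have hdl : d l = 1 := by omega
    have herase : (d.erase l).degree = 1 := by omega
    obtain ⟨k, hk⟩ := aux_deg_one _ herase
    refine ⟨k, ?_⟩
    rw [← h2, hdl, hk]
  · -- d l = 2
    have hdl : d l = 2 := by omega
    have herase : d.erase l = 0 := by
      rw [← Finsupp.degree_eq_zero_iff]; omega
    refine ⟨l, ?_⟩
    rw [← h2, hdl, herase, add_zero, ← Finsupp.single_add]

end AuxFinsupp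

section AuxPoly

variable {σ K : Type*} [Fintype σ] [DecidableEq σ] [CommRing K]

lemma aux_sum (α : σ → ℤ) (l k : σ) :
    (∑ j, α j * (((Finsupp.single l 1 + Finsupp.single k 1 : σ →₀ ℕ)) j : ℤ)) = α l + α k := by
  simp only [Finsupp.add_apply, Finsupp.single_apply]
  push_cast
  have key : ∀ a : σ, (∑ j, α j * (if a = j then (1 : ℤ) else 0)) = α a := by
    intro a
    simp [mul_ite, Finset.sum_ite_eq]
  calc (∑ j, α j * ((if l = j then (1:ℤ) else 0) + (if k = j then (1:ℤ) else 0)))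
      = (∑ j, α j * (if l = j then (1:ℤ) else 0))
        + (∑ j, α j * (if k = j then (1:ℤ) else 0)) := by
        rw [← Finset.sum_add_distrib]
        exact Finset.sum_congr rfl (fun j _ => by ring)
    _ = α l + α k := by rw [key l, key k]

omit [Fintype σ] [DecidableEq σ] in
lemma aux_hdeg2 (F : MvPolynomial σ K) (hhom : F.IsHomogeneous 2) :
    ∀ m ∈ F.support, Finsupp.degree m = 2 := by
  intro m hm
  rw [Finsupp.degree_eq_weight_one]
  exact hhom (mem_support_iff.mp hm)

/-- A quadratic form whose monomials all have nonpositive α-degree vanishes at points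
supported on the positive part of α. -/
lemma evalA (α : σ → ℤ) (F : MvPolynomial σ K) (hhom : F.IsHomogeneous 2)
    (hdeg : ∀ m ∈ F.support, (∑ j, α j * (m j : ℤ)) ≤ 0)
    (x : σ → K) (hx : ∀ j, α j ≤ 0 → x j = 0) :
    eval x F = 0 := by
  rw [eval_eq]
  apply Finset.sum_eq_zero
  intro d hd
  have hdd : Finsupp.degree d = 2 := aux_hdeg2 F hhom d hd
  have h0 : d ≠ 0 := by
    rintro rfl; simp at hdd
  obtain ⟨l, hl⟩ := Finsupp.support_nonempty_iff.mpr h0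
  obtain ⟨k, hk⟩ := aux_deg_two d hdd (Finsupp.mem_support_iff.mp hl)
  have hsum : (∑ j, α j * (d j : ℤ)) = α l + α k := by
    rw [hk]; exact aux_sum α l k
  have hle := hdeg d hd
  rw [hsum] at hle
  have hkmem : d k ≠ 0 := by
    rw [hk]
    simp only [Finsupp.add_apply, Finsupp.single_eq_same, Finsupp.single_apply]
    omega
  rcases le_or_gt (α l) 0 with h | h
  · apply mul_eq_zero_of_right
    apply Finset.prod_eq_zero hl
    rw [hx l h]
    exact zero_pow (Finsupp.mem_support_iff.mp hl)
  · have hαk : α k ≤ 0 := by omega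
    apply mul_eq_zero_of_right
    apply Finset.prod_eq_zero (Finsupp.mem_support_iff.mpr hkmem)
    rw [hx k hαk]
    exact zero_pow hkmem

/-- Partial derivatives in directions with nonnegative weight vanish at points supported on
the positive part of α. -/
lemma evalB (α : σ → ℤ) (F : MvPolynomial σ K) (hhom : F.IsHomogeneous 2)
    (hdeg : ∀ m ∈ F.support, (∑ j, α j * (m j : ℤ)) ≤ 0)
    (x : σ → K) (hx : ∀ j, α j ≤ 0 → x j = 0)
    (l : σ) (hl : 0 ≤ α l) :
    eval x (pderiv l F) = 0 := by
  conv_lhs => rw [F.as_sum]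
  rw [map_sum, map_sum]
  apply Finset.sum_eq_zero
  intro d hd
  rw [pderiv_monomial, eval_monomial]
  rcases eq_or_ne (d l) 0 with h0 | h0
  · simp [h0]
  obtain ⟨k, hk⟩ := aux_deg_two d (aux_hdeg2 F hhom d hd) h0
  have hsum : (∑ j, α j * (d j : ℤ)) = α l + α k := by
    rw [hk]; exact aux_sum α l k
  have hle := hdeg d hd
  rw [hsum] at hle
  have hαk : α k ≤ 0 := by omega
  have hxk : x k = 0 := hx k hαk
  have hsub : d - Finsupp.single l 1 = Finsupp.single k 1 := by
    rw [hk, add_tsub_cancel_left]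
  rw [hsub, Finsupp.prod_single_index (by simp)]
  simp [hxk]

/-- Linearity of the gradient evaluation for quadratic forms. -/
lemma evalC (F : MvPolynomial σ K) (hhom : F.IsHomogeneous 2) (l : σ) (a b : K)
    (x y : σ → K) :
    eval (a • x + b • y) (pderiv l F)
      = a * eval x (pderiv l F) + b * eval y (pderiv l F) := by
  have expand : ∀ z : σ → K, eval z (pderiv l F)
      = ∑ d ∈ F.support, eval z (pderiv l (monomial d (coeff d F))) := by
    intro z
    conv_lhs => rw [F.as_sum]
    rw [map_sum, map_sum]
  rw [expand (a • x + b • y), expand x, expand y, Finset.mul_sum, Finset.mul_sum,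
    ← Finset.sum_add_distrib]
  apply Finset.sum_congr rfl
  intro d hd
  rw [pderiv_monomial, eval_monomial, eval_monomial, eval_monomial]
  rcases eq_or_ne (d l) 0 with h0 | h0
  · simp [h0]
  obtain ⟨k, hk⟩ := aux_deg_two d (aux_hdeg2 F hhom d hd) h0
  have hsub : d - Finsupp.single l 1 = Finsupp.single k 1 := by
    rw [hk, add_tsub_cancel_left]
  rw [hsub, Finsupp.prod_single_index (by simp), Finsupp.prod_single_index (by simp),
    Finsupp.prod_single_index (by simp)]
  simp only [Pi.add_apply, Pi.smul_apply, smul_eq_mul, pow_one]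
  ring

/-- Finite-sum version of linearity. -/
lemma evalCsum {ι : Type*} (F : MvPolynomial σ K) (hhom : F.IsHomogeneous 2) (l : σ)
    (s : Finset ι) (v : ι → K) (w : ι → σ → K) :
    eval (∑ k ∈ s, v k • w k) (pderiv l F) = ∑ k ∈ s, v k * eval (w k) (pderiv l F) := by
  classical
  induction s using Finset.induction_on with
  | empty =>
      have h := evalC F hhom l 0 0 0 0
      simpa using h
  | @insert a s ha ih =>
      rw [Finset.sum_insert ha, Finset.sum_insert ha, ← ih]
      have h := evalC F hhom l (v a) 1 (w a) (∑ k ∈ s, v k • w k)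
      simpa using h

end AuxPoly

theorem stmt15 (K : Type*) [Field K] [IsAlgClosed K] (N c : ℕ)
    (hN : 3 ≤ N) (hc : 2 ≤ c) (hcN : c ≤ N - 1)
    (F : Fin c → MvPolynomial (Fin (N + 1)) K)
    (hF0 : ∀ i, F i ≠ 0)
    (hFhom : ∀ i, (F i).IsHomogeneous 2)
    (hsmooth : ∀ x : Fin (N + 1) → K, x ≠ 0 → (∀ i, eval x (F i) = 0) →
      Matrix.rank (Matrix.of fun (i : Fin c) (j : Fin (N + 1)) =>
        eval x (pderiv j (F i))) = c)
    (α : Fin (N + 1) → ℤ) (hmono : Monotone α) (hnz : α ≠ 0)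
    (hsym : ∀ i : Fin (N + 1), α i + α i.rev = 0) :
    ¬ (∀ i : Fin c,
        (∀ m ∈ (F i).support, (∑ j, α j * (m j : ℤ)) ≤ 0) ∧
        (∃ m ∈ (F i).support, (∑ j, α j * (m j : ℤ)) = 0)) := by
  classical
  intro h
  -- the positive part of α is nonempty
  have hne : ∃ j : Fin (N + 1), 0 < α j := by
    by_contra hno
    push_neg at hno
    apply hnz
    funext j
    have h1 := hno j
    have h2 := hno j.rev
    have h3 := hsym j
    simp only [Pi.zero_apply]
    omega
  haveI hni : Nonempty {j : Fin (N + 1) // 0 < α j} :=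
    ⟨⟨hne.choose, hne.choose_spec⟩⟩
  set ι := {j : Fin (N + 1) // 0 < α j} with hι
  -- extension of a vector on the positive part by zero
  set ex : (ι → K) → (Fin (N + 1) → K) :=
    fun v t => if h : 0 < α t then v ⟨t, h⟩ else 0 with hex
  have hx_ex : ∀ v : ι → K, ∀ t, α t ≤ 0 → ex v t = 0 := by
    intro v t ht
    exact dif_neg (by omega)
  have ex_sum : ∀ v : ι → K, ex v = ∑ k : ι, v k • ex (Pi.single k 1) := by
    intro v
    funext t
    simp only [Finset.sum_apply, Pi.smul_apply, smul_eq_mul, hex]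
    rcases lt_or_ge 0 (α t) with hp | hp
    · rw [dif_pos hp]
      have : ∀ k : ι, (if h : 0 < α t then (Pi.single k (1:K) : ι → K) ⟨t, h⟩ else 0)
          = if (⟨t, hp⟩ : ι) = k then 1 else 0 := by
        intro k
        rw [dif_pos hp, Pi.single_apply]
      simp only [this, mul_ite, mul_one, mul_zero]
      rw [Finset.sum_ite_eq Finset.univ (⟨t, hp⟩ : ι) v]
      simp
    · rw [dif_neg (by omega)]
      symm
      apply Finset.sum_eq_zero
      intro k _
      rw [dif_neg (by omega), mul_zero]
  -- the two chosen quadrics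
  have h0c : 0 < c := by omega
  have h1c : 1 < c := by omega
  set i0 : Fin c := ⟨0, h0c⟩ with hi0
  set i1 : Fin c := ⟨1, h1c⟩ with hi1
  have hi01 : i0 ≠ i1 := by
    simp [hi0, hi1, Fin.ext_iff]
  -- the matrices of the gradient pairing on the positive part
  set M : Fin c → Matrix ι ι K :=
    fun i => Matrix.of fun j k => eval (ex (Pi.single k 1)) (pderiv (Fin.rev j.val) (F i))
    with hM
  have hMv : ∀ (i : Fin c) (v : ι → K) (j : ι),
      (M i).mulVec v j = eval (ex v) (pderiv (Fin.rev j.val) (F i)) := by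
    intro i v j
    rw [ex_sum v, evalCsum (F i) (hFhom i) _ Finset.univ v (fun k => ex (Pi.single k 1))]
    simp only [Matrix.mulVec, dotProduct, hM, Matrix.of_apply]
    exact Finset.sum_congr rfl (fun k _ => mul_comm _ _)
  -- the pencil argument: find a singular member of the pencil
  obtain ⟨a, b, hab, v, hv, hker⟩ :
      ∃ a b : K, (a ≠ 0 ∨ b ≠ 0) ∧ ∃ v : ι → K, v ≠ 0 ∧
        (a • M i0 + b • M i1).mulVec v = 0 := by
    rcases eq_or_ne (M i1).det 0 with hdet | hdet
    · obtain ⟨v, hv, hvz⟩ := (Matrix.exists_mulVec_eq_zero_iff.mpr hdet)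
      refine ⟨0, 1, Or.inr one_ne_zero, v, hv, ?_⟩
      simpa using hvz
    · haveI : Nontrivial (ι → K) := Function.nontrivial
      set G : Matrix ι ι K := (M i1)⁻¹ * M i0 with hG
      obtain ⟨t, ht⟩ := Module.End.exists_eigenvalue (Matrix.toLin' G)
      obtain ⟨w, hw⟩ := ht.exists_hasEigenvector
      have hw0 : w ≠ 0 := hw.right
      have hGw : G.mulVec w = t • w := by
        have := hw.apply_eq_smul
        rwa [Matrix.toLin'_apply] at this
      refine ⟨1, -t, Or.inl one_ne_zero, w, hw0, ?_⟩
      have hunit : IsUnit (M i1).det := isUnit_iff_ne_zero.mpr hdet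
      have hA : M i1 * G = M i0 := Matrix.mul_nonsing_inv_cancel_left (M i1) (M i0) hunit
      have hAw : (M i0).mulVec w = t • (M i1).mulVec w := by
        rw [← hA, ← Matrix.mulVec_mulVec, hGw, Matrix.mulVec_smul]
      rw [Matrix.add_mulVec, Matrix.smul_mulVec, Matrix.smul_mulVec, hAw]
      funext j
      simp [neg_smul]
  -- the point witnessing singularity
  set x : Fin (N + 1) → K := ex v with hx
  have hxsupp : ∀ t, α t ≤ 0 → x t = 0 := hx_ex v
  have hx0 : x ≠ 0 := by
    obtain ⟨j, hj⟩ := Function.ne_iff.mp hv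
    intro h0
    apply hj
    have := congrFun h0 j.val
    simp only [hx, hex, Pi.zero_apply] at this
    rw [dif_pos j.2] at this
    simpa using this
  have hevals : ∀ i, eval x (F i) = 0 := fun i =>
    evalA α (F i) (hFhom i) (h i).1 x hxsupp
  -- the Jacobian matrix
  set J : Matrix (Fin c) (Fin (N + 1)) K :=
    Matrix.of (fun i j => eval x (pderiv j (F i))) with hJ
  have hrank : J.rank = c := hsmooth x hx0 hevals
  -- linear dependence of rows i0 and i1
  have hrow : ∀ l : Fin (N + 1), a * J i0 l + b * J i1 l = 0 := by
    intro l
    rcases le_or_gt 0 (α l) with hl | hl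
    · have h1 : J i0 l = 0 := evalB α (F i0) (hFhom i0) (h i0).1 x hxsupp l hl
      have h2 : J i1 l = 0 := evalB α (F i1) (hFhom i1) (h i1).1 x hxsupp l hl
      rw [h1, h2]; ring
    · have hjpos : 0 < α l.rev := by
        have := hsym l; omega
      set j : ι := ⟨l.rev, hjpos⟩ with hj
      have hrev : Fin.rev (j.val) = l := by
        simp [hj, Fin.rev_rev]
      have hk := congrFun hker j
      rw [Matrix.add_mulVec, Matrix.smul_mulVec, Matrix.smul_mulVec] at hk
      simp only [Pi.add_apply, Pi.smul_apply, smul_eq_mul, Pi.zero_apply] at hk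
      rw [hMv i0 v j, hMv i1 v j, hrev] at hk
      exact hk
  -- contradiction with the rank condition
  set u : Fin c → K :=
    fun i => a * (if i = i0 then 1 else 0) + b * (if i = i1 then 1 else 0) with hu
  have hua : u i0 = a := by simp [hu, hi01]
  have hub : u i1 = b := by simp [hu, Ne.symm hi01]
  have hu0 : u ≠ 0 := by
    intro h0
    have h1 := congrFun h0 i0
    have h2 := congrFun h0 i1
    rw [hua] at h1
    rw [hub] at h2
    rcases hab with ha | hb
    · exact ha h1
    · exact hb h2
  have hvecmul : J.transpose.mulVec u = 0 := by
    funext l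
    have : J.transpose.mulVec u l = ∑ i, u i * J i l := by
      simp only [Matrix.mulVec, dotProduct, Matrix.transpose_apply]
      exact Finset.sum_congr rfl (fun i _ => mul_comm _ _)
    rw [this]
    have expand : ∀ i : Fin c, u i * J i l
        = a * ((if i = i0 then 1 else 0) * J i l) + b * ((if i = i1 then 1 else 0) * J i l) := by
      intro i; simp only [hu]; ring
    rw [Finset.sum_congr rfl (fun i _ => expand i), Finset.sum_add_distrib,
      ← Finset.mul_sum, ← Finset.mul_sum]
    simp only [ite_mul, one_mul, zero_mul, Finset.sum_ite_eq' Finset.univ,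
      Finset.mem_univ, if_pos]
    simpa using hrow l
  -- rank-nullity contradiction
  have hker' : u ∈ LinearMap.ker (J.transpose.mulVecLin) := by
    rw [LinearMap.mem_ker, Matrix.mulVecLin_apply, hvecmul]
  haveI : Nontrivial (LinearMap.ker (J.transpose.mulVecLin)) :=
    nontrivial_of_ne ⟨u, hker'⟩ 0 (by
      intro heq
      apply hu0
      simpa using congrArg Subtype.val heq)
  have hpos : 0 < Module.finrank K (LinearMap.ker (J.transpose.mulVecLin)) :=
    Module.finrank_pos_iff.mpr this
  have hrn := LinearMap.finrank_range_add_finrank_ker (J.transpose.mulVecLin)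
  have hdom : Module.finrank K (Fin c → K) = c := Module.finrank_fin_fun K
  have hrt : J.transpose.rank = J.rank := Matrix.rank_transpose J
  rw [Matrix.rank] at hrt
  rw [hdom, hrt, hrank] at hrn
  omega
end
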